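/- arXiv:2507.03452 — 2 statements merged into one kernel-verified Lean document; each statement's English description precedes it below -/
import Mathlib

section
/- When E₁ = H², every multiplier between generalized Toeplitz kernels is a multiplier between the corresponding classical Toeplitz kernels: M(ker T_g^{H²,E₂}, ker T_h^{H²,E₂}) ⊆ M(ker T_g, ker T_h). -/
open MeasureTheory Complex Filter ComplexConjugate ENNReal AddCircle

noncomputable section

/-- The unit circle, modeled as `ℝ/ℤ`. -/
abbrev Tc := UnitAddCircle

/-- The boundary coordinate function `z = e^{2πiθ}`. -/
def zB : Tc → ℂ := fun θ => fourier 1 θ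

/-- Boundary Hardy space `H²(𝔻)`: `L²` functions with vanishing negative Fourier coefficients. -/
def H2 : Set (Tc → ℂ) := {f | MemLp f 2 volume ∧ ∀ n : ℤ, n < 0 → fourierCoeff f n = 0}

/-- Boundary `H^∞(𝔻)`. -/
def Hinf : Set (Tc → ℂ) := {f | MemLp f ⊤ volume ∧ ∀ n : ℤ, n < 0 → fourierCoeff f n = 0}

/-- An inner function: bounded analytic with unimodular boundary values. -/
def IsInnerD (u : Tc → ℂ) : Prop := u ∈ Hinf ∧ ∀ᵐ θ : Tc, ‖u θ‖ = 1

/-- An outer function (boundary values): the radial limit of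
`exp(∫ (ζ+z)/(ζ-z) w(ζ) dm(ζ))` for some integrable real `w` (namely `w = log|f|`). -/
def IsOuterD (p : Tc → ℂ) : Prop :=
  ∃ w : Tc → ℝ, Integrable w volume ∧ ∃ F : ℂ → ℂ,
    (∀ z ∈ Metric.ball (0:ℂ) 1,
      F z = Complex.exp (∫ ζ : Tc, ((fourier 1 ζ + z) / (fourier 1 ζ - z)) * (w ζ : ℂ))) ∧
    (∀ᵐ θ : Tc, Tendsto (fun r : ℝ => F ((r : ℂ) * fourier 1 θ))
      (nhdsWithin 1 (Set.Iio 1)) (nhds (p θ)))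

/-- The Nevanlinna–Smirnov class `N`: quotients `G/F` with `G, F ∈ H^∞`, `F` outer,
identified with boundary values. -/
def SmirnovD : Set (Tc → ℂ) :=
  {u | ∃ G F : Tc → ℂ, G ∈ Hinf ∧ F ∈ Hinf ∧ IsOuterD F ∧ ∀ᵐ θ : Tc, u θ * F θ = G θ}

/-- The set of complex conjugates of the Smirnov class, `conj(N)`. -/
def ConjSmirnovD : Set (Tc → ℂ) := {u | ∃ v ∈ SmirnovD, ∀ᵐ θ : Tc, u θ = conj (v θ)}

/-- A nonzero essentially bounded symbol. -/
def SymbOk (g : Tc → ℂ) : Prop := MemLp g ⊤ volume ∧ ¬ (∀ᵐ θ : Tc, g θ = 0)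

/-- The generalized Toeplitz kernel `ker T_g^{E₁,E₂} = {f ∈ E₁ : gf ⊥ E₂}`. -/
def gkerD (g : Tc → ℂ) (E₁ E₂ : Set (Tc → ℂ)) : Set (Tc → ℂ) :=
  {f | f ∈ E₁ ∧ ∀ e ∈ E₂, (∫ θ : Tc, g θ * f θ * conj (e θ)) = 0}

/-- `K` is a generalized Toeplitz kernel relative to `(E₁, E₂)`. -/
def IsGTKD (E₁ E₂ K : Set (Tc → ℂ)) : Prop := ∃ g : Tc → ℂ, SymbOk g ∧ K = gkerD g E₁ E₂

/-- `K` is the minimal generalized Toeplitz kernel containing `k`. -/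
def IsMinKerD (E₁ E₂ K : Set (Tc → ℂ)) (k : Tc → ℂ) : Prop :=
  IsGTKD E₁ E₂ K ∧ k ∈ K ∧ ∀ K', IsGTKD E₁ E₂ K' → k ∈ K' → K ⊆ K'

/-- `k` is a maximal vector for `ker T_g^{E₁,E₂}`. -/
def IsMaxVecD (g : Tc → ℂ) (E₁ E₂ : Set (Tc → ℂ)) (k : Tc → ℂ) : Prop :=
  IsMinKerD E₁ E₂ (gkerD g E₁ E₂) k

/-- A closed subspace of `H²`. -/
def ClosedSub (E : Set (Tc → ℂ)) : Prop :=
  E ⊆ H2 ∧ (0 : Tc → ℂ) ∈ E ∧ (∀ f ∈ E, ∀ g ∈ E, f + g ∈ E) ∧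
  (∀ c : ℂ, ∀ f ∈ E, c • f ∈ E) ∧
  ∀ f ∈ H2, (∀ ε : ℝ, 0 < ε → ∃ g ∈ E, eLpNorm (f - g) 2 volume < ENNReal.ofReal ε) → f ∈ E

/-- The shift-invariant subspace `Θ·H²`. -/
def shiftSet (Θ : Tc → ℂ) : Set (Tc → ℂ) := (fun h => Θ * h) '' H2

/-- The multiplier space `M(X, Y) = {w : wX ⊆ Y}` (boundary multiplication). -/
def MultD (X Y : Set (Tc → ℂ)) : Set (Tc → ℂ) := {w | ∀ f ∈ X, w * f ∈ Y}

/-- A nontrivial set of functions: contains an element not a.e. zero. -/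
def NontrivD (K : Set (Tc → ℂ)) : Prop := ∃ f ∈ K, ¬ (∀ᵐ θ : Tc, f θ = 0)

lemma vol_eq_haar : (volume : Measure Tc) = (haarAddCircle : Measure Tc) := by
  rw [AddCircle.volume_eq_smul_haarAddCircle]
  simp

lemma memℒp_conj' {p : ℝ≥0∞} {μ : Measure Tc} {f : Tc → ℂ} (hf : MemLp f p μ) :
    MemLp (fun t => conj (f t)) p μ := by
  refine ⟨(continuous_star.comp_aestronglyMeasurable hf.1 : ), ?_⟩
  have h2 : eLpNorm (fun t => conj (f t)) p μ = eLpNorm f p μ := by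
    rw [← eLpNorm_norm (fun t => conj (f t)), ← eLpNorm_norm f]
    simp
  rw [h2]; exact hf.2

lemma memℒp_top_fourier (n : ℤ) (μ : Measure Tc) :
    MemLp (fun t : Tc => (fourier n t : ℂ)) ⊤ μ := by
  apply memLp_top_of_bound (fourier n).continuous.aestronglyMeasurable 1
  filter_upwards with t
  simp [Circle.norm_coe, fourier_apply]

lemma fourierCoeff_congr_ae' {f g : Tc → ℂ} (h : f =ᵐ[haarAddCircle] g) (n : ℤ) :
    fourierCoeff f n = fourierCoeff g n := by
  unfold fourierCoeff
  exact integral_congr_ae (h.mono fun t ht => by simp only [ht])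

lemma mul_mem_H2 {Θ f : Tc → ℂ} (hΘ : MemLp Θ ⊤ volume)
    (hΘc : ∀ n : ℤ, n < 0 → fourierCoeff Θ n = 0) (hf : f ∈ H2) : Θ * f ∈ H2 := by
  obtain ⟨hf2, hfc⟩ := hf
  have hmem : MemLp (Θ * f) 2 volume := by
    have := hf2.smul hΘ (r := 2)
    simpa [Pi.smul_apply', smul_eq_mul] using this
  refine ⟨hmem, fun n hn => ?_⟩
  -- move to Haar measure
  have hf2' : MemLp f 2 (haarAddCircle : Measure Tc) := vol_eq_haar ▸ hf2
  have hΘ' : MemLp Θ ⊤ (haarAddCircle : Measure Tc) := vol_eq_haar ▸ hΘ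
  set fL : Lp ℂ 2 (haarAddCircle : Measure Tc) := hf2'.toLp f with hfL
  have hGtop : MemLp (fun t : Tc => (fourier (-n) t : ℂ) * Θ t) ⊤
      (haarAddCircle : Measure Tc) := by
    have := (memℒp_top_fourier (-n) haarAddCircle).smul hΘ' (r := ⊤)
    simpa [Pi.smul_apply', smul_eq_mul, mul_comm, Pi.mul_def] using this
  have hG2 : MemLp (fun t : Tc => conj ((fourier (-n) t : ℂ) * Θ t)) 2
      (haarAddCircle : Measure Tc) :=
    memℒp_conj' (hGtop.mono_exponent le_top)
  set vG : Lp ℂ 2 (haarAddCircle : Measure Tc) := hG2.toLp _ with hvG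
  have key1 : fourierCoeff (Θ * f) n = @inner ℂ _ _ vG fL := by
    rw [MeasureTheory.L2.inner_def]
    unfold fourierCoeff
    apply integral_congr_ae
    filter_upwards [hG2.coeFn_toLp, hf2'.coeFn_toLp] with t h1 h2
    rw [← hvG] at h1
    rw [← hfL] at h2
    simp only [RCLike.inner_apply, h1, h2, RingHom.id_apply, starRingEnd_self_apply,
      Pi.mul_apply, smul_eq_mul]
    ring
  have key2 : HasSum (fun k : ℤ => fourierBasis.repr fL k • @inner ℂ _ _ vG (fourierBasis k))
      (@inner ℂ _ _ vG fL) := by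
    have := (fourierBasis.hasSum_repr fL).mapL (innerSL ℂ vG)
    simpa [inner_smul_right] using this
  have keyz : ∀ k : ℤ, fourierBasis.repr fL k • @inner ℂ _ _ vG (fourierBasis k) = 0 := by
    intro k
    rcases lt_or_ge k 0 with hk | hk
    · have : fourierBasis.repr fL k = 0 := by
        rw [fourierBasis_repr]
        rw [fourierCoeff_congr_ae' hf2'.coeFn_toLp]
        exact hfc k hk
      rw [this, zero_smul]
    · have : @inner ℂ _ _ vG (fourierBasis k) = 0 := by
        have hb : (fourierBasis (T := 1) k : Lp ℂ 2 (haarAddCircle : Measure Tc))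
            = fourierLp 2 k := by rw [coe_fourierBasis]
        rw [hb, MeasureTheory.L2.inner_def]
        have : (∫ t : Tc, @inner ℂ _ _ ((vG : Tc → ℂ) t) ((fourierLp 2 k : Tc → ℂ) t)
            ∂haarAddCircle) = fourierCoeff Θ (n - k) := by
          unfold fourierCoeff
          apply integral_congr_ae
          filter_upwards [hG2.coeFn_toLp, coeFn_fourierLp 2 k] with t h1 h2
          rw [← hvG] at h1
          simp only [RCLike.inner_apply, h1, h2, starRingEnd_self_apply, smul_eq_mul]
          have : (fourier (-(n - k)) t : ℂ) = fourier (-n) t * fourier k t := by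
            rw [show -(n - k) = -n + k by ring, fourier_add]
          rw [this]; ring
        rw [this]
        exact hΘc (n - k) (by omega)
      rw [this, smul_zero]
  have : fourierCoeff (Θ * f) n = 0 := by
    rw [key1]
    have h0 : HasSum (fun _ : ℤ => (0 : ℂ)) (@inner ℂ _ _ vG fL) := by
      convert key2 using 1
      ext k; rw [keyz k]
    simpa using h0.unique hasSum_zero
  exact this

/-- When `E₁ = H²`, multipliers between generalized Toeplitz kernels are multipliers between
the corresponding classical Toeplitz kernels. -/
theorem stmt6 (Θ₂ g h : Tc → ℂ) (hΘ₂ : IsInnerD Θ₂) (hg : SymbOk g) (hh : SymbOk h) :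
    MultD (gkerD g H2 (shiftSet Θ₂)) (gkerD h H2 (shiftSet Θ₂)) ⊆
      MultD (gkerD g H2 H2) (gkerD h H2 H2) := by
  obtain ⟨⟨hΘb, hΘc⟩, hΘu⟩ := hΘ₂
  intro w hw f hf
  obtain ⟨hfH2, hfperp⟩ := hf
  have hunim : ∀ᵐ θ : Tc, Θ₂ θ * conj (Θ₂ θ) = 1 := by
    filter_upwards [hΘu] with θ hθ
    rw [Complex.mul_conj, ← Complex.sq_norm, hθ]
    norm_num
  -- f lies in the generalized kernel
  have hf1 : f ∈ gkerD g H2 (shiftSet Θ₂) := by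
    refine ⟨hfH2, ?_⟩
    rintro e ⟨et, het, rfl⟩
    exact hfperp _ (mul_mem_H2 hΘb hΘc het)
  have hwf := hw f hf1
  -- Θ₂ * f lies in the generalized kernel
  have hf2 : Θ₂ * f ∈ gkerD g H2 (shiftSet Θ₂) := by
    refine ⟨mul_mem_H2 hΘb hΘc hfH2, ?_⟩
    rintro e ⟨et, het, rfl⟩
    have hint : (∫ θ : Tc, g θ * (Θ₂ * f) θ * conj ((Θ₂ * et) θ))
        = ∫ θ : Tc, g θ * f θ * conj (et θ) := by
      apply integral_congr_ae
      filter_upwards [hunim] with θ hθ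
      simp only [Pi.mul_apply, map_mul]
      calc g θ * (Θ₂ θ * f θ) * (conj (Θ₂ θ) * conj (et θ))
          = g θ * f θ * conj (et θ) * (Θ₂ θ * conj (Θ₂ θ)) := by ring
        _ = g θ * f θ * conj (et θ) := by rw [hθ, mul_one]
    rw [hint]
    exact hfperp et het
  have hwf2 := hw _ hf2
  refine ⟨hwf.1, ?_⟩
  intro e he
  have h0 := hwf2.2 (Θ₂ * e) ⟨e, he, rfl⟩
  have hint : (∫ θ : Tc, h θ * (w * (Θ₂ * f)) θ * conj ((Θ₂ * e) θ))
      = ∫ θ : Tc, h θ * (w * f) θ * conj (e θ) := by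
    apply integral_congr_ae
    filter_upwards [hunim] with θ hθ
    simp only [Pi.mul_apply, map_mul]
    calc h θ * (w θ * (Θ₂ θ * f θ)) * (conj (Θ₂ θ) * conj (e θ))
        = h θ * (w θ * f θ) * conj (e θ) * (Θ₂ θ * conj (Θ₂ θ)) := by ring
      _ = h θ * (w θ * f θ) * conj (e θ) := by rw [hθ, mul_one]
  rw [← hint, h0]
end
end

section
/- For any inner function Θ₂ on 𝔻 and any f ∈ H² with inner-outer factorization f = θp, the product f · (Θ₂·conj(θzp)/p) equals Θ₂·conj(zp), which lies in (Θ₂H²)^⊥; hence f belongs to the generalized Toeplitz kernel with symbol Θ₂·conj(θzp)/p. -/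
open MeasureTheory Complex Filter ComplexConjugate ENNReal

noncomputable section

section Auxiliary

lemma haar_eq : (AddCircle.haarAddCircle : Measure Tc) = volume := by
  rw [AddCircle.volume_eq_smul_haarAddCircle]; simp

local notation "⟪" x ", " y "⟫" => @inner ℂ _ _ x y

lemma H2_mul_int (p h : Tc → ℂ) (hp : p ∈ H2) (hh : h ∈ H2) :
    (∫ θ : Tc, zB θ * (p θ * h θ)) = 0 := by
  have hzB : MemLp zB ⊤ (volume : Measure Tc) := by
    apply memLp_top_of_bound ((map_continuous (fourier (T := 1) 1)).aestronglyMeasurable) 1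
    filter_upwards with θ; simp [zB, Circle.norm_coe]
  set u : Tc → ℂ := fun θ => conj (zB θ * h θ) with hu_def
  have hnorm : ∀ θ : Tc, ‖u θ‖ = ‖h θ‖ := by
    intro θ
    simp [hu_def, zB, Circle.norm_coe]
  have husm : AEStronglyMeasurable u (volume : Measure Tc) :=
    RCLike.continuous_conj.comp_aestronglyMeasurable
      (((map_continuous (fourier (T := 1) 1)).aestronglyMeasurable).mul hh.1.1)
  have hu : MemLp u 2 (volume : Measure Tc) :=
    hh.1.of_le husm (Filter.Eventually.of_forall fun θ => (hnorm θ).le)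
  have hu' : MemLp u 2 (AddCircle.haarAddCircle : Measure Tc) := haar_eq ▸ hu
  have hp' : MemLp p 2 (AddCircle.haarAddCircle : Measure Tc) := haar_eq ▸ hp.1
  set U := hu'.toLp u with hU
  set P := hp'.toLp p with hP
  have hrepr : ∀ (F : Lp ℂ 2 (AddCircle.haarAddCircle : Measure Tc)) (g : Tc → ℂ)
      (hg : MemLp g 2 (AddCircle.haarAddCircle : Measure Tc)), F = hg.toLp g →
      ∀ n, fourierBasis.repr F n = fourierCoeff g n := by
    intro F g hg hFg n
    rw [fourierBasis_repr, hFg]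
    unfold fourierCoeff
    exact integral_congr_ae ((hg.coeFn_toLp).mono fun θ hθ => by simp only [hθ])
  have hUrepr : ∀ n, fourierBasis.repr U n = fourierCoeff u n := hrepr U u hu' rfl
  have hPrepr : ∀ n, fourierBasis.repr P n = fourierCoeff p n := hrepr P p hp' rfl
  have hUconj : ∀ n : ℤ, conj (fourierCoeff u n) = fourierCoeff h (-(n + 1)) := by
    intro n
    unfold fourierCoeff
    rw [← integral_conj]
    apply integral_congr_ae
    filter_upwards with θ
    simp only [smul_eq_mul, map_mul, conj_conj, hu_def, neg_neg]
    rw [fourier_neg, conj_conj, zB, fourier_add]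
    ring
  have hinner : ⟪U, P⟫ = 0 := by
    rw [← fourierBasis.repr.inner_map_map U P, lp.inner_eq_tsum]
    have hz : ∀ n : ℤ, conj (fourierBasis.repr U n) * fourierBasis.repr P n = 0 := by
      intro n
      rw [hUrepr, hPrepr]
      rcases lt_or_ge n 0 with hn | hn
      · rw [hp.2 n hn, mul_zero]
      · rw [hUconj n, hh.2 (-(n+1)) (by omega), zero_mul]
    simp [RCLike.inner_apply, hz, fun n => (mul_comm (fourierBasis.repr P n) _).trans (hz n)]
  have hUP : (∫ θ : Tc, zB θ * (p θ * h θ) ∂AddCircle.haarAddCircle) = ⟪U, P⟫ := by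
    rw [L2.inner_def]
    apply integral_congr_ae
    filter_upwards [hu'.coeFn_toLp, hp'.coeFn_toLp] with θ h1 h2
    simp only [RCLike.inner_apply]
    rw [h1, h2]
    simp only [hu_def, map_mul, conj_conj]
    ring
  have hvol : (∫ θ : Tc, zB θ * (p θ * h θ))
      = ∫ θ : Tc, zB θ * (p θ * h θ) ∂AddCircle.haarAddCircle := by rw [haar_eq]
  rw [hvol, hUP, hinner]

lemma unim {u : Tc → ℂ} (h : IsInnerD u) : ∀ᵐ θ : Tc, u θ * conj (u θ) = 1 := by
  filter_upwards [h.2] with θ h1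
  rw [Complex.mul_conj, Complex.normSq_eq_norm_sq, h1]
  norm_num

end Auxiliary

/-- For inner `Θ₂` and `f = θp ∈ H²`, the product `f · (Θ₂·conj(θzp)/p)` equals
`Θ₂·conj(zp)`, which is orthogonal to `Θ₂H²`; hence `f` lies in the generalized Toeplitz
kernel with symbol `Θ₂·conj(θzp)/p`. -/
theorem stmt16 (Θ₂ θf p f : Tc → ℂ) (hΘ₂ : IsInnerD Θ₂) (hf : f ∈ H2) (hθ : IsInnerD θf)
    (hpo : IsOuterD p) (hpH : p ∈ H2)
    (hfact : ∀ᵐ θ : Tc, f θ = θf θ * p θ) :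
    (∀ᵐ θ : Tc, f θ * (Θ₂ θ * conj (θf θ * zB θ * p θ) / p θ) = Θ₂ θ * conj (zB θ * p θ)) ∧
    (∀ e ∈ shiftSet Θ₂, (∫ θ : Tc, (Θ₂ θ * conj (zB θ * p θ)) * conj (e θ)) = 0) ∧
    f ∈ gkerD (fun θ => Θ₂ θ * conj (θf θ * zB θ * p θ) / p θ) H2 (shiftSet Θ₂) := by
  have part1 : ∀ᵐ θ : Tc,
      f θ * (Θ₂ θ * conj (θf θ * zB θ * p θ) / p θ) = Θ₂ θ * conj (zB θ * p θ) := by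
    filter_upwards [hfact, unim hθ] with θ h1 h2
    rw [h1]
    by_cases hp0 : p θ = 0
    · simp [hp0]
    · field_simp
      simp only [map_mul]
      linear_combination (Θ₂ θ * conj (zB θ) * conj (p θ)) * h2
  have part2 : ∀ e ∈ shiftSet Θ₂,
      (∫ θ : Tc, (Θ₂ θ * conj (zB θ * p θ)) * conj (e θ)) = 0 := by
    rintro e ⟨h, hh, rfl⟩
    have hae : (fun θ : Tc => (Θ₂ θ * conj (zB θ * p θ)) * conj ((Θ₂ * h) θ))
        =ᵐ[volume] fun θ => conj (zB θ * (p θ * h θ)) := by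
      filter_upwards [unim hΘ₂] with θ h2
      simp only [Pi.mul_apply, map_mul]
      linear_combination (conj (zB θ) * conj (p θ) * conj (h θ)) * h2
    rw [integral_congr_ae hae, integral_conj, H2_mul_int p h hpH hh, map_zero]
  refine ⟨part1, part2, hf, ?_⟩
  intro e he
  rw [← part2 e he]
  apply integral_congr_ae
  filter_upwards [part1] with θ h1
  rw [← h1]
  ring
end
end
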